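/- Let n ≥ 3 and P as above. For each j ∈ {1,…,n-2}, the real part of the field X_{-j} = ∂/∂z_j - ζ ∂/∂z_{j+1} + 2 z_{n-j} ∂/∂w is tangent to M_0 = {Re w = P}; equivalently, the polynomial identity ∂P/∂x_j - s ∂P/∂x_{j+1} = 2 x_{n-j} holds, and for j = n-1 (the field X_{1-n} = ∂/∂z_{n-1} + 2z_1 ∂/∂w) one has ∂P/∂x_{n-1} = 2x_1. -/

import Mathlib

open scoped BigOperators

/-- Index `k` as an element of `Fin (n+1)` (coordinates `(w, z_1, …, z_{n-1}, ζ)`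
of `ℂ^{n+1}`: `w` is index `0`, `z_j` is index `j`, `ζ` is index `n`). -/
def idx (n k : ℕ) : Fin (n + 1) := ⟨k % (n + 1), Nat.mod_lt _ (Nat.succ_pos n)⟩

/-- `P(x_1,…,x_{n-1},s) = Σ_{0<j<j+k≤n} x_j x_k s^{n-j-k}` with `x_j = Re z_j`
and `s = Re ζ`, as a function on `ℂ^{n+1}`. -/
noncomputable def Pmod (n : ℕ) : (Fin (n + 1) → ℂ) → ℝ :=
  fun p => ∑ j : Fin (n + 1), ∑ k : Fin (n + 1),
    if 1 ≤ (j : ℕ) ∧ 1 ≤ (k : ℕ) ∧ (j : ℕ) + (k : ℕ) ≤ n then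
      (p j).re * (p k).re * ((p (idx n n)).re) ^ (n - (j : ℕ) - (k : ℕ))
    else 0

/-- Defining function `ρ = Re w - P` of the model hypersurface `M₀ = {ρ = 0}`. -/
noncomputable def rho (n : ℕ) : (Fin (n + 1) → ℂ) → ℝ :=
  fun p => (p (idx n 0)).re - Pmod n p

/-- The field `X_{-j} = ∂/∂z_j - ζ ∂/∂z_{j+1} + 2 z_{n-j} ∂/∂w` for
`1 ≤ j ≤ n-2`, and `X_{1-n} = ∂/∂z_{n-1} + 2 z_1 ∂/∂w` for `j = n-1`. -/
noncomputable def vfX (n j : ℕ) : (Fin (n + 1) → ℂ) → (Fin (n + 1) → ℂ) :=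
  fun p =>
    (Pi.single (idx n j) 1 : Fin (n + 1) → ℂ)
      + (if j + 1 ≤ n - 1 then
          (-(p (idx n n))) • (Pi.single (idx n (j + 1)) 1 : Fin (n + 1) → ℂ) else 0)
      + (2 * p (idx n (n - j))) • (Pi.single (idx n 0) 1 : Fin (n + 1) → ℂ)

/-- `P` as a function of the real variables `(x_1, …, x_{n-1}, s)`; the
variable `x_j` sits at index `j` of `Fin (n+1)` and `s` at index `n`
(index `0` is unused). -/
noncomputable def Preal (n : ℕ) : (Fin (n + 1) → ℝ) → ℝ :=
  fun y => ∑ j : Fin (n + 1), ∑ k : Fin (n + 1),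
    if 1 ≤ (j : ℕ) ∧ 1 ≤ (k : ℕ) ∧ (j : ℕ) + (k : ℕ) ≤ n then
      y j * y k * (y (idx n n)) ^ (n - (j : ℕ) - (k : ℕ))
    else 0

lemma idx_coe {n k : ℕ} (h : k ≤ n) : ((idx n k : Fin (n+1)) : ℕ) = k :=
  Nat.mod_eq_of_lt (by omega)

lemma hasFDerivAt_pow_proj {N : ℕ} (e : ℕ) (i : Fin N) (y : Fin N → ℝ) :
    HasFDerivAt (𝕜 := ℝ) (fun y : Fin N → ℝ => (y i)^e)
      (((e : ℝ) * (y i)^(e-1)) • ContinuousLinearMap.proj i) y := by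
  induction e with
  | zero => simpa using hasFDerivAt_const (1:ℝ) y
  | succ e ih =>
      have h := ih.fun_mul ((ContinuousLinearMap.proj i (R := ℝ)
        (φ := fun _ : Fin N => ℝ)).hasFDerivAt (x := y))
      simp only [ContinuousLinearMap.proj_apply, ← pow_succ] at h
      refine h.congr_fderiv ?_
      ext v
      simp [ContinuousLinearMap.proj_apply]
      rcases e with _ | e
      · simp
      · simp [pow_succ]; ring

noncomputable def DP (n : ℕ) (y : Fin (n + 1) → ℝ) : (Fin (n + 1) → ℝ) →L[ℝ] ℝ :=
  ∑ j : Fin (n + 1), ∑ k : Fin (n + 1),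
    if 1 ≤ (j : ℕ) ∧ 1 ≤ (k : ℕ) ∧ (j : ℕ) + (k : ℕ) ≤ n then
      (y k * (y (idx n n)) ^ (n - (j:ℕ) - (k:ℕ))) • ContinuousLinearMap.proj j
      + (y j * (y (idx n n)) ^ (n - (j:ℕ) - (k:ℕ))) • ContinuousLinearMap.proj k
      + (y j * y k * ((n - (j:ℕ) - (k:ℕ) : ℕ) * (y (idx n n)) ^ (n - (j:ℕ) - (k:ℕ) - 1)))
          • ContinuousLinearMap.proj (idx n n)
    else 0

lemma hasFDerivAt_Preal (n : ℕ) (y : Fin (n+1) → ℝ) : HasFDerivAt (Preal n) (DP n y) y := by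
  unfold Preal DP
  refine HasFDerivAt.fun_sum fun j _ => HasFDerivAt.fun_sum fun k _ => ?_
  split_ifs with h
  · have h1 := (((ContinuousLinearMap.proj j (R := ℝ) (φ := fun _ : Fin (n+1) => ℝ)).hasFDerivAt
        (x := y)).fun_mul ((ContinuousLinearMap.proj k (R := ℝ)
        (φ := fun _ : Fin (n+1) => ℝ)).hasFDerivAt (x := y))).fun_mul
        (hasFDerivAt_pow_proj (n - (j:ℕ) - (k:ℕ)) (idx n n) y)
    simp only [ContinuousLinearMap.proj_apply] at h1
    refine h1.congr_fderiv ?_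
    ext v
    simp [ContinuousLinearMap.proj_apply]
    ring
  · exact hasFDerivAt_const 0 y

lemma fderiv_Preal (n : ℕ) (y : Fin (n+1) → ℝ) : fderiv ℝ (Preal n) y = DP n y :=
  (hasFDerivAt_Preal n y).fderiv
lemma DP_single (n : ℕ) (y : Fin (n+1) → ℝ) (m : Fin (n+1))
    (h1 : 1 ≤ (m:ℕ)) (h2 : (m:ℕ) < n) :
    DP n y (Pi.single m 1) =
      2 * ∑ k : Fin (n+1), (if 1 ≤ (k:ℕ) ∧ (m:ℕ) + (k:ℕ) ≤ n then
        y k * (y (idx n n)) ^ (n - (m:ℕ) - (k:ℕ)) else 0) := by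
  have hnn : idx n n ≠ m := Fin.ne_of_val_ne (by rw [idx_coe le_rfl]; omega)
  set s := y (idx n n) with hs
  set A : Fin (n+1) → Fin (n+1) → ℝ := fun j k =>
    if 1 ≤ (j : ℕ) ∧ 1 ≤ (k : ℕ) ∧ (j : ℕ) + (k : ℕ) ≤ n then
      y k * s ^ (n - (j:ℕ) - (k:ℕ)) else 0 with hA
  set B : Fin (n+1) → Fin (n+1) → ℝ := fun j k =>
    if 1 ≤ (j : ℕ) ∧ 1 ≤ (k : ℕ) ∧ (j : ℕ) + (k : ℕ) ≤ n then
      y j * s ^ (n - (j:ℕ) - (k:ℕ)) else 0 with hB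
  have step : ∀ j k : Fin (n+1),
      (if 1 ≤ (j : ℕ) ∧ 1 ≤ (k : ℕ) ∧ (j : ℕ) + (k : ℕ) ≤ n then
        (y k * s ^ (n - (j:ℕ) - (k:ℕ))) * (if j = m then (1:ℝ) else 0)
        + (y j * s ^ (n - (j:ℕ) - (k:ℕ))) * (if k = m then (1:ℝ) else 0)
      else 0)
      = (if j = m then A j k else 0) + (if k = m then B j k else 0) := by
    intro j k
    simp only [hA, hB]
    split_ifs <;> ring
  calc DP n y (Pi.single m 1)
      = ∑ j : Fin (n + 1), ∑ k : Fin (n + 1),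
        (if 1 ≤ (j : ℕ) ∧ 1 ≤ (k : ℕ) ∧ (j : ℕ) + (k : ℕ) ≤ n then
          (y k * s ^ (n - (j:ℕ) - (k:ℕ))) * (if j = m then (1:ℝ) else 0)
          + (y j * s ^ (n - (j:ℕ) - (k:ℕ))) * (if k = m then (1:ℝ) else 0)
        else 0) := by
        unfold DP
        rw [ContinuousLinearMap.sum_apply]
        refine Finset.sum_congr rfl fun j _ => ?_
        rw [ContinuousLinearMap.sum_apply]
        refine Finset.sum_congr rfl fun k _ => ?_
        rw [apply_ite (fun L : (Fin (n+1) → ℝ) →L[ℝ] ℝ => L (Pi.single m 1))]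
        simp [ContinuousLinearMap.proj_apply, Pi.single_apply, hnn, hs]
    _ = (∑ j : Fin (n + 1), ∑ k : Fin (n + 1), (if j = m then A j k else 0))
        + (∑ j : Fin (n + 1), ∑ k : Fin (n + 1), (if k = m then B j k else 0)) := by
        rw [← Finset.sum_add_distrib]
        refine Finset.sum_congr rfl fun j _ => ?_
        rw [← Finset.sum_add_distrib]
        exact Finset.sum_congr rfl fun k _ => step j k
    _ = (∑ k : Fin (n + 1), A m k) + (∑ j : Fin (n + 1), B j m) := by
        congr 1
        · have : ∀ j : Fin (n+1), (∑ k : Fin (n+1), if j = m then A j k else 0)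
              = if j = m then (∑ k : Fin (n+1), A j k) else 0 := by
            intro j; by_cases hj : j = m <;> simp [hj]
          rw [Finset.sum_congr rfl fun j _ => this j]
          simp [Finset.sum_ite_eq']
        · rw [Finset.sum_comm]
          have : ∀ k : Fin (n+1), (∑ j : Fin (n+1), if k = m then B j k else 0)
              = if k = m then (∑ j : Fin (n+1), B j k) else 0 := by
            intro k; by_cases hk : k = m <;> simp [hk]
          rw [Finset.sum_congr rfl fun k _ => this k]
          simp [Finset.sum_ite_eq']
    _ = 2 * ∑ k : Fin (n+1), (if 1 ≤ (k:ℕ) ∧ (m:ℕ) + (k:ℕ) ≤ n then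
          y k * s ^ (n - (m:ℕ) - (k:ℕ)) else 0) := by
        have eA : ∀ k : Fin (n+1), A m k =
            (if 1 ≤ (k:ℕ) ∧ (m:ℕ) + (k:ℕ) ≤ n then y k * s ^ (n - (m:ℕ) - (k:ℕ)) else 0) := by
          intro k; simp only [hA]; split_ifs <;> first | rfl | omega
        have eB : ∀ j : Fin (n+1), B j m =
            (if 1 ≤ (j:ℕ) ∧ (m:ℕ) + (j:ℕ) ≤ n then y j * s ^ (n - (m:ℕ) - (j:ℕ)) else 0) := by
          intro j; simp only [hB]
          split_ifs with hc hd hd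
          · rw [show n - (j:ℕ) - (m:ℕ) = n - (m:ℕ) - (j:ℕ) by omega]
          · omega
          · omega
          · rfl
        rw [Finset.sum_congr rfl fun k _ => eA k, Finset.sum_congr rfl fun j _ => eB j]
        ring

lemma part3 (n : ℕ) (hn : 3 ≤ n) (y : Fin (n+1) → ℝ) :
    DP n y (Pi.single (idx n (n-1)) 1) = 2 * y (idx n 1) := by
  have c1 : ((idx n (n-1) : Fin (n+1)):ℕ) = n-1 := idx_coe (by omega)
  rw [DP_single n y _ (by omega) (by omega)]
  simp only [c1]
  have e1 : ∀ k : Fin (n+1),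
      (if 1 ≤ (k:ℕ) ∧ (n-1) + (k:ℕ) ≤ n then y k * (y (idx n n)) ^ (n - (n-1) - (k:ℕ)) else 0)
      = if k = idx n 1 then y k else 0 := by
    intro k
    have hk : k = idx n 1 ↔ (k:ℕ) = 1 := by
      rw [Fin.ext_iff, idx_coe (by omega)]
    split_ifs with h h' h'
    · rw [show n - (n-1) - (k:ℕ) = 0 by omega, pow_zero, mul_one]
    · exfalso; rw [hk] at h'; omega
    · exfalso; rw [hk] at h'; omega
    · rfl
  rw [Finset.sum_congr rfl fun k _ => e1 k]
  simp [Finset.sum_ite_eq']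

lemma part2 (n : ℕ) (hn : 3 ≤ n) (j : ℕ) (hj1 : 1 ≤ j) (hj2 : j ≤ n-2) (y : Fin (n+1) → ℝ) :
    DP n y (Pi.single (idx n j) 1)
      - y (idx n n) * DP n y (Pi.single (idx n (j+1)) 1) = 2 * y (idx n (n-j)) := by
  set s := y (idx n n) with hs
  have c1 : ((idx n j : Fin (n+1)):ℕ) = j := idx_coe (by omega)
  have c2 : ((idx n (j+1) : Fin (n+1)):ℕ) = j+1 := idx_coe (by omega)
  rw [DP_single n y _ (by rw [c1]; omega) (by rw [c1]; omega),
      DP_single n y _ (by rw [c2]; omega) (by rw [c2]; omega)]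
  simp only [c1, c2, ← hs]
  have hmul : s * (2 * ∑ k : Fin (n+1),
      (if 1 ≤ (k:ℕ) ∧ (j+1) + (k:ℕ) ≤ n then y k * s ^ (n - (j+1) - (k:ℕ)) else 0))
      = 2 * ∑ k : Fin (n+1),
      (if 1 ≤ (k:ℕ) ∧ (j+1) + (k:ℕ) ≤ n then y k * s ^ (n - j - (k:ℕ)) else 0) := by
    rw [← mul_assoc, mul_comm s 2, mul_assoc, Finset.mul_sum]
    congr 1
    refine Finset.sum_congr rfl fun k _ => ?_
    split_ifs with h
    · rw [show n - j - (k:ℕ) = (n - (j+1) - (k:ℕ)) + 1 by omega, pow_succ]; ring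
    · rw [mul_zero]
  rw [hmul, ← mul_sub, ← Finset.sum_sub_distrib]
  have e1 : ∀ k : Fin (n+1),
      ((if 1 ≤ (k:ℕ) ∧ j + (k:ℕ) ≤ n then y k * s ^ (n - j - (k:ℕ)) else 0)
       - (if 1 ≤ (k:ℕ) ∧ (j+1) + (k:ℕ) ≤ n then y k * s ^ (n - j - (k:ℕ)) else 0))
      = if k = idx n (n-j) then y k else 0 := by
    intro k
    have hk : k = idx n (n-j) ↔ (k:ℕ) = n - j := by
      rw [Fin.ext_iff, idx_coe (by omega)]
    by_cases hk1 : (k:ℕ) = n - j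
    · rw [if_pos (hk.mpr hk1)]
      have h : 1 ≤ (k:ℕ) ∧ j + (k:ℕ) ≤ n := by omega
      rw [if_pos h, if_neg (by omega), show n - j - (k:ℕ) = 0 by omega, pow_zero, mul_one,
        sub_zero]
    · rw [if_neg (fun hh => hk1 (hk.mp hh))]
      by_cases h : 1 ≤ (k:ℕ) ∧ j + (k:ℕ) ≤ n
      · rw [if_pos h, if_pos (by omega), sub_self]
      · rw [if_neg h, if_neg (by omega), sub_self]
  rw [Finset.sum_congr rfl fun k _ => e1 k]
  simp [Finset.sum_ite_eq']

noncomputable def Lre (n : ℕ) : (Fin (n+1) → ℂ) →L[ℝ] (Fin (n+1) → ℝ) :=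
  ContinuousLinearMap.pi (fun i => Complex.reCLM.comp (ContinuousLinearMap.proj i))

lemma Lre_apply (n : ℕ) (p : Fin (n+1) → ℂ) (i : Fin (n+1)) : Lre n p i = (p i).re := rfl

lemma Lre_single (n : ℕ) (k : Fin (n+1)) :
    Lre n (Pi.single k (1:ℂ)) = Pi.single k (1:ℝ) := by
  funext i
  rw [Lre_apply]
  by_cases h : i = k
  · subst h; simp
  · simp [Pi.single_eq_of_ne h]

lemma Lre_smul_single (n : ℕ) (c : ℂ) (k : Fin (n+1)) :
    Lre n (c • (Pi.single k 1 : Fin (n+1) → ℂ)) = c.re • (Pi.single k 1 : Fin (n+1) → ℝ) := by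
  funext i
  rw [Lre_apply]
  by_cases h : i = k
  · subst h; simp
  · simp [Pi.single_eq_of_ne h]

lemma fderiv_rho' (n : ℕ) (p : Fin (n+1) → ℂ) (v : Fin (n+1) → ℂ) :
    fderiv ℝ (rho n) p v = (v (idx n 0)).re - DP n (Lre n p) (Lre n v) := by
  have h1 := (Complex.reCLM.comp
    (ContinuousLinearMap.proj (R := ℝ) (idx n 0) (φ := fun _ : Fin (n+1) => ℂ))).hasFDerivAt
    (x := p)
  have h2 : HasFDerivAt (fun q : Fin (n+1) → ℂ => Preal n (Lre n q))
      ((DP n (Lre n p)).comp (Lre n)) p :=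
    (hasFDerivAt_Preal n (Lre n p)).comp p ((Lre n).hasFDerivAt)
  have h : HasFDerivAt (rho n)
      ((Complex.reCLM.comp (ContinuousLinearMap.proj (R := ℝ) (idx n 0)
        (φ := fun _ : Fin (n+1) => ℂ))) - (DP n (Lre n p)).comp (Lre n)) p := by
    exact h1.sub h2
  rw [h.fderiv]
  simp [Lre_apply]

lemma DP_e0 (n : ℕ) (hn : 1 ≤ n) (y : Fin (n+1) → ℝ) :
    DP n y (Pi.single (idx n 0) 1) = 0 := by
  unfold DP
  rw [ContinuousLinearMap.sum_apply]
  refine Finset.sum_eq_zero fun j _ => ?_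
  rw [ContinuousLinearMap.sum_apply]
  refine Finset.sum_eq_zero fun k _ => ?_
  rw [apply_ite (fun L : (Fin (n+1) → ℝ) →L[ℝ] ℝ => L (Pi.single (idx n 0) 1))]
  split_ifs with h
  · have hj : j ≠ idx n 0 := Fin.ne_of_val_ne (by rw [idx_coe (by omega)]; omega)
    have hk : k ≠ idx n 0 := Fin.ne_of_val_ne (by rw [idx_coe (by omega)]; omega)
    have hnn : idx n n ≠ idx n 0 := Fin.ne_of_val_ne
      (by rw [idx_coe le_rfl, idx_coe (by omega)]; omega)
    simp [ContinuousLinearMap.proj_apply, Pi.single_eq_of_ne hj, Pi.single_eq_of_ne hk,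
      Pi.single_eq_of_ne hnn]
  · rfl

lemma part1 (n : ℕ) (hn : 3 ≤ n) (j : ℕ) (hj1 : 1 ≤ j) (hj2 : j ≤ n - 1)
    (p : Fin (n+1) → ℂ) : fderiv ℝ (rho n) p (vfX n j p) = 0 := by
  rw [fderiv_rho']
  set yL := Lre n p with hyL
  have hj0 : (idx n 0 : Fin (n+1)) ≠ idx n j := Fin.ne_of_val_ne (by
    rw [idx_coe (by omega), idx_coe (by omega)]; omega)
  have hj10 : (idx n 0 : Fin (n+1)) ≠ idx n (j+1) := Fin.ne_of_val_ne (by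
    rw [idx_coe (by omega), idx_coe (by omega)]; omega)
  have hv0 : ((vfX n j p) (idx n 0)).re = 2 * (p (idx n (n - j))).re := by
    unfold vfX
    have e2 : ((if j+1 ≤ n-1 then
        (-(p (idx n n))) • (Pi.single (idx n (j+1)) 1 : Fin (n+1) → ℂ) else 0)) (idx n 0)
        = 0 := by
      split_ifs
      · simp [Pi.single_eq_of_ne hj10]
      · rfl
    simp only [Pi.add_apply, e2, Pi.single_eq_of_ne hj0, Pi.smul_apply, Pi.single_eq_same,
      add_zero, zero_add, smul_eq_mul, mul_one]
    simp [Complex.mul_re]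
  have hLv : Lre n (vfX n j p) = Pi.single (idx n j) 1
      + (if j + 1 ≤ n - 1 then
          (-(p (idx n n)).re) • (Pi.single (idx n (j+1)) 1 : Fin (n+1) → ℝ) else 0)
      + (2 * (p (idx n (n - j))).re) • (Pi.single (idx n 0) 1 : Fin (n+1) → ℝ) := by
    unfold vfX
    rw [map_add, map_add, Lre_single]
    congr 1
    · congr 1
      split_ifs with hc
      · rw [Lre_smul_single]; simp
      · simp
    · rw [Lre_smul_single]
      norm_num
  rw [hv0, hLv, map_add, map_add, (DP n yL).map_smul, DP_e0 n (by omega), smul_zero, add_zero]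
  by_cases hc : j + 1 ≤ n - 1
  · rw [if_pos hc, (DP n yL).map_smul]
    have h2 := part2 n hn j hj1 (by omega) yL
    have hs : yL (idx n n) = (p (idx n n)).re := rfl
    have ht : yL (idx n (n - j)) = (p (idx n (n - j))).re := rfl
    rw [hs, ht] at h2
    simp only [smul_eq_mul, neg_mul]
    linarith [h2]
  · rw [if_neg hc, map_zero, add_zero]
    have hj' : j = n - 1 := by omega
    subst hj'
    have h3 := part3 n hn yL
    have ht : yL (idx n 1) = (p (idx n 1)).re := rfl
    rw [ht] at h3
    rw [show n - (n-1) = 1 by omega, h3]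
    ring

/-- For each `j = 1, …, n-2` the real part of `X_{-j}` is tangent to
`M₀ = {Re w = P}`, as is `X_{1-n}`; equivalently the polynomial identities
`∂P/∂x_j - s ∂P/∂x_{j+1} = 2 x_{n-j}` and `∂P/∂x_{n-1} = 2 x_1` hold. -/
theorem X_tangent_to_model (n : ℕ) (hn : 3 ≤ n) :
    (∀ j : ℕ, 1 ≤ j → j ≤ n - 1 →
      ∀ p : Fin (n + 1) → ℂ, fderiv ℝ (rho n) p (vfX n j p) = 0) ∧
    (∀ j : ℕ, 1 ≤ j → j ≤ n - 2 → ∀ y : Fin (n + 1) → ℝ,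
      fderiv ℝ (Preal n) y (Pi.single (idx n j) 1)
        - y (idx n n) * fderiv ℝ (Preal n) y (Pi.single (idx n (j + 1)) 1)
        = 2 * y (idx n (n - j))) ∧
    (∀ y : Fin (n + 1) → ℝ,
      fderiv ℝ (Preal n) y (Pi.single (idx n (n - 1)) 1) = 2 * y (idx n 1)) := by
  refine ⟨fun j hj1 hj2 p => part1 n hn j hj1 hj2 p, fun j hj1 hj2 y => ?_, fun y => ?_⟩
  · rw [fderiv_Preal]
    exact part2 n hn j hj1 hj2 y
  · rw [fderiv_Preal]
    exact part3 n hn y
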